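/- arXiv:2603.21602 — 3 statements merged into one kernel-verified Lean document; each statement's English description precedes it below -/
import Mathlib

section
/- There exist constants c₅ > 1, r₄ ∈ (0,1), C > 0 and a real number μ₀ ≠ 0 such that for every c > c₅ there exists a twice continuously differentiable function w : (0,∞) → ℝ satisfying: (i) w″(r) = −5·(1/3 + r²)^(−2)·(w(r) + r) for all r > 0; (ii) w(c) = 0; (iii) 1/2 ≤ w(r)/μ₀ ≤ 3/2 for all r ∈ (0, r₄); (iv) |w(r)| ≤ C for all r > 0 (with C independent of c); (v) for every r > 0, ∫_r^∞ (d/dρ (w(ρ)/ρ))² ρ² dρ < ∞. -/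
open MeasureTheory Real Set

noncomputable section

/-- The ground state `W(x) = (1/3 + |x|^2)^(-1/2)` on `ℝ³`. -/
def W3 (x : EuclideanSpace ℝ (Fin 3)) : ℝ := (1/3 + ‖x‖^2) ^ (-(1:ℝ)/2)

/-- The rescaled ground state `W_λ(x) = λ^(-1/2) W(x/λ)`. -/
def Wlam (lam : ℝ) (x : EuclideanSpace ℝ (Fin 3)) : ℝ := lam ^ (-(1:ℝ)/2) * W3 (lam⁻¹ • x)

/-- The Strichartz norm `‖χ_Ψ u‖_Y = (∫ (∫_{(x,t)∈Ψ} |u|^10 dx)^(1/2) dt)^(1/5)`. -/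
def Ynorm (Ψ : Set (EuclideanSpace ℝ (Fin 3) × ℝ))
    (u : EuclideanSpace ℝ (Fin 3) → ℝ → ℝ) : ℝ :=
  (∫ t : ℝ, (∫ x in {x | (x, t) ∈ Ψ}, |u x t| ^ 10) ^ ((1:ℝ)/2)) ^ ((1:ℝ)/5)

/-- The norm `‖χ_Ψ u‖_{L¹L²} = ∫ (∫_{(x,t)∈Ψ} |u|² dx)^(1/2) dt`. -/
def L1L2 (Ψ : Set (EuclideanSpace ℝ (Fin 3) × ℝ))
    (u : EuclideanSpace ℝ (Fin 3) → ℝ → ℝ) : ℝ :=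
  ∫ t : ℝ, (∫ x in {x | (x, t) ∈ Ψ}, (u x t) ^ 2) ^ ((1:ℝ)/2)

/-- The channel region `Ω_{r₁,r₂} = {(x,t) : |t| + r₁ < |x| < |t| + r₂}`. -/
def channel (r₁ r₂ : ℝ) : Set (EuclideanSpace ℝ (Fin 3) × ℝ) :=
  {p | |p.2| + r₁ < ‖p.1‖ ∧ ‖p.1‖ < |p.2| + r₂}

/-- The radial free wave with radiation profile `G` (in the negative time direction):
`v(x,t) = |x|⁻¹ ∫_{t-|x|}^{t+|x|} G(s) ds`. -/
def freeWave (G : ℝ → ℝ) (x : EuclideanSpace ℝ (Fin 3)) (t : ℝ) : ℝ :=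
  ‖x‖⁻¹ * ∫ s in (t - ‖x‖)..(t + ‖x‖), G s

/-- `‖G‖_{L²(E)} = (∫_E |G|²)^(1/2)`. -/
def L2on (G : ℝ → ℝ) (E : Set ℝ) : ℝ := (∫ s in E, (G s)^2) ^ ((1:ℝ)/2)

/-- The set whose supremum is `sup_{0<r<λ} (λ/r) ∫_{-r}^r |G(s)|² ds`. -/
def tauA (G : ℝ → ℝ) (lam : ℝ) : Set ℝ :=
  {A | ∃ r, 0 < r ∧ r < lam ∧ A = (lam / r) * ∫ s in (-r)..r, (G s)^2}

/-- The set whose supremum is `sup_{r>0} r^(-1/2) ∫_{-r}^r |G(s)| ds`. -/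
def tauB (G : ℝ → ℝ) : Set ℝ :=
  {B | ∃ r, 0 < r ∧ B = (∫ s in (-r)..r, |G s|) / Real.sqrt r}

/-- `τ = (sup_{0<r<λ} (λ/r)∫_{-r}^r |G|²)^(1/2) + sup_{r>0} r^(-1/2)∫_{-r}^r |G|`. -/
def tau (G : ℝ → ℝ) (lam : ℝ) : ℝ := Real.sqrt (sSup (tauA G lam)) + sSup (tauB G)



def S (r : ℝ) : ℝ := Real.sqrt (1 + 3*r^2)
def bb : ℝ := (Real.sqrt 3)⁻¹

lemma hS1 (r : ℝ) : 1 ≤ S r := by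
  rw [show (1:ℝ) = Real.sqrt 1 by simp]
  exact Real.sqrt_le_sqrt (by nlinarith)

lemma hSpos (r : ℝ) : 0 < S r := lt_of_lt_of_le one_pos (hS1 r)
lemma hSne (r : ℝ) : S r ≠ 0 := (hSpos r).ne'
lemma hSsq (r : ℝ) : S r ^ 2 = 1 + 3*r^2 := Real.sq_sqrt (by positivity)

lemma hSd (r : ℝ) : HasDerivAt S (3*r / S r) r := by
  have h : HasDerivAt (fun x : ℝ => 1 + 3*x^2) (6*r) r := by
    have := ((hasDerivAt_pow 2 r).const_mul 3).const_add 1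
    exact this.congr_deriv (by ring)
  have := h.sqrt (by positivity)
  refine this.congr_deriv ?_
  rw [S]; field_simp; ring

def ww (A r : ℝ) : ℝ := (A * (r - 3*r^3) + bb * (9*r^4 - 18*r^2 + 1)) / (S r)^3 - r
def ww1 (A r : ℝ) : ℝ := (A * (1 - 15*r^2) + bb * (27*r^5 + 90*r^3 - 45*r)) / (S r)^5 - 1
def ww2 (A r : ℝ) : ℝ := -(45 * (A * (r - 3*r^3) + bb * (9*r^4 - 18*r^2 + 1))) / (S r)^7

lemma hww (A r : ℝ) : HasDerivAt (ww A) (ww1 A r) r := by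
  have hN : HasDerivAt (fun x : ℝ => A * (x - 3*x^3) + bb * (9*x^4 - 18*x^2 + 1))
      (A * (1 - 9*r^2) + bb * (36*r^3 - 36*r)) r := by
    have h1 : HasDerivAt (fun x : ℝ => x - 3*x^3) (1 - 9*r^2) r := by
      have := (hasDerivAt_id r).sub ((hasDerivAt_pow 3 r).const_mul 3)
      exact this.congr_deriv (by push_cast; ring)
    have h2 : HasDerivAt (fun x : ℝ => 9*x^4 - 18*x^2 + 1) (36*r^3 - 36*r) r := by
      have := (((hasDerivAt_pow 4 r).const_mul 9).sub ((hasDerivAt_pow 2 r).const_mul 18)).add_const 1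
      exact this.congr_deriv (by push_cast; ring)
    exact (h1.const_mul A).add (h2.const_mul bb)
  have hD : HasDerivAt (fun x => (S x)^3) ((3:ℕ) * S r ^ 2 * (3*r / S r)) r := (hSd r).pow 3
  have hdiv := (hN.div hD (pow_ne_zero 3 (hSne r))).sub (hasDerivAt_id r)
  refine hdiv.congr_deriv ?_
  symm
  have hs := hSsq r
  have hne := hSne r
  rw [ww1]
  have key : (A * (1 - 9*r^2) + bb * (36*r^3 - 36*r)) * S r^2
      - 9*r*(A * (r - 3*r^3) + bb * (9*r^4 - 18*r^2 + 1))
      = A * (1 - 15*r^2) + bb * (27*r^5 + 90*r^3 - 45*r) := by rw [hs]; ring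
  field_simp
  linear_combination ((S r^6 + S r^7) * (A*(9*r^2-1) + bb*(36*r - 36*r^3)) + S r^6 * (A*(1-9*r^2) + bb*(36*r^3-36*r)) + ((-9)*A*r^2*S r^7 + A*S r^7 + (-36)*r*bb*S r^7 + 36*r^3*bb*S r^7 + 9*A*r^2 + (-1)*A + 36*r*bb + (-36)*r^3*bb)) * hs

lemma hww1 (A r : ℝ) : HasDerivAt (ww1 A) (ww2 A r) r := by
  have hN : HasDerivAt (fun x : ℝ => A * (1 - 15*x^2) + bb * (27*x^5 + 90*x^3 - 45*x))
      (A * (-30*r) + bb * (135*r^4 + 270*r^2 - 45)) r := by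
    have h1 : HasDerivAt (fun x : ℝ => 1 - 15*x^2) (-30*r) r := by
      have := ((hasDerivAt_pow 2 r).const_mul 15).const_sub 1
      exact this.congr_deriv (by push_cast; ring)
    have h2 : HasDerivAt (fun x : ℝ => 27*x^5 + 90*x^3 - 45*x) (135*r^4 + 270*r^2 - 45) r := by
      have := (((hasDerivAt_pow 5 r).const_mul 27).add ((hasDerivAt_pow 3 r).const_mul 90)).sub
        ((hasDerivAt_id r).const_mul 45)
      exact this.congr_deriv (by push_cast; ring)
    exact (h1.const_mul A).add (h2.const_mul bb)
  have hD : HasDerivAt (fun x => (S x)^5) ((5:ℕ) * S r ^ 4 * (3*r / S r)) r := (hSd r).pow 5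
  have hdiv := (hN.div hD (pow_ne_zero 5 (hSne r))).sub_const 1
  refine hdiv.congr_deriv ?_
  symm
  have hs := hSsq r
  have hne := hSne r
  rw [ww2]
  have key : (A * (-30*r) + bb * (135*r^4 + 270*r^2 - 45)) * S r^2
      - 15*r*(A * (1 - 15*r^2) + bb * (27*r^5 + 90*r^3 - 45*r))
      = -(45 * (A * (r - 3*r^3) + bb * (9*r^4 - 18*r^2 + 1))) := by rw [hs]; ring
  field_simp
  linear_combination ((S r^10 + S r^11) * (30*A*r + bb*(45 - 270*r^2 - 135*r^4)) + S r^10 * (-(30*A*r) + bb*(270*r^2 + 135*r^4 - 45)) + ((-30)*A*r*S r^11 + 270*r^2*bb*S r^11 + 135*r^4*bb*S r^11 + (-45)*bb*S r^11 + 30*A*r + (-270)*r^2*bb + (-135)*r^4*bb + 45*bb)) * hs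

lemma ht2 : (Real.sqrt 3)^2 = 3 := Real.sq_sqrt (by norm_num)
lemma ht1 : 1 ≤ Real.sqrt 3 := by nlinarith [ht2, Real.sqrt_nonneg 3]
lemma htle2 : Real.sqrt 3 ≤ 2 := by nlinarith [ht2, Real.sqrt_nonneg 3]
lemma hbbt : bb * Real.sqrt 3 = 1 := by
  rw [bb]; field_simp
lemma hbbpos : 0 < bb := by rw [bb]; positivity
lemma hbble1 : bb ≤ 1 := by
  rw [bb]; rw [inv_le_one_iff₀]; right; exact ht1
lemma hbbhalf : 1/2 ≤ bb := by
  nlinarith [hbbt, htle2, hbbpos.le, mul_le_mul_of_nonneg_left htle2 hbbpos.le]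
lemma hb3 : 3 * bb = Real.sqrt 3 := by
  rw [bb]; rw [mul_inv_eq_iff_eq_mul₀ (by positivity)]
  nlinarith [ht2]

lemma hstr (r : ℝ) (hr : 0 ≤ r) : Real.sqrt 3 * r ≤ S r := by
  have h1 : (Real.sqrt 3 * r)^2 ≤ S r ^ 2 := by
    rw [hSsq, mul_pow, ht2]; nlinarith
  nlinarith [hSpos r, mul_nonneg (Real.sqrt_nonneg 3) hr]

lemma hstr3 (r : ℝ) (hr : 0 ≤ r) : 3 * Real.sqrt 3 * r^3 ≤ S r ^ 3 := by
  have h := pow_le_pow_left₀ (by positivity : (0:ℝ) ≤ Real.sqrt 3 * r) (hstr r hr) 3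
  have e : (Real.sqrt 3 * r)^3 = (Real.sqrt 3)^2 * (Real.sqrt 3) * r^3 := by ring
  rw [e, ht2] at h; linarith

lemma h5r3 (r : ℝ) (hr : 0 ≤ r) : 5 * r^3 ≤ S r ^ 3 := by
  have h35 : 5 ≤ 3 * Real.sqrt 3 := by nlinarith [ht2, Real.sqrt_nonneg 3]
  have := mul_le_mul_of_nonneg_right h35 (pow_nonneg hr 3)
  linarith [hstr3 r hr]

lemma hp3 (r : ℝ) : 1 + 3*r^2 ≤ S r ^ 3 := by
  nlinarith [hS1 r, hSsq r, hSpos r]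

lemma hts (r : ℝ) (hr : 0 ≤ r) : Real.sqrt 3 * S r ≤ 3*r + 2 := by
  have h1 : (Real.sqrt 3 * S r)^2 = 3 + 9*r^2 := by rw [mul_pow, ht2, hSsq]; ring
  nlinarith [hSpos r, mul_nonneg (Real.sqrt_nonneg 3) (hSpos r).le]

lemma hts3 (r : ℝ) (hr : 0 ≤ r) : 3 * Real.sqrt 3 * S r ^ 3 ≤ (3*r + 2)^3 := by
  have h := pow_le_pow_left₀ (mul_nonneg (Real.sqrt_nonneg 3) (hSpos r).le) (hts r hr) 3
  have e : (Real.sqrt 3 * S r)^3 = (Real.sqrt 3)^2 * (Real.sqrt 3) * S r^3 := by ring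
  rw [e, ht2] at h; linarith

lemma KI (r : ℝ) (hr : 0 ≤ r) :
    |bb * (9*r^4 - 18*r^2 + 1) - r * S r ^ 3| ≤ 132 * S r ^ 3 := by
  rw [abs_le]
  have hb0 := hbbpos
  have hb1 := hbble1
  have l3 := h5r3 r hr
  have l4 := hp3 r
  have hs1 := hS1 r
  constructor
  · -- r s³ - bbQ ≤ 132 s³
    have e1 := mul_le_mul_of_nonneg_left (hts3 r hr) hr
    -- r * (3√3 s³) ≤ r (3r+2)³; multiply by bb/3:
    have e2 := mul_le_mul_of_nonneg_left e1 (by positivity : (0:ℝ) ≤ bb/3)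
    -- bb/3 * (r * (3√3 s³)) = bb√3 * r * s³ = r * s³
    have e3 : bb/3 * (r * (3 * Real.sqrt 3 * S r^3)) = r * S r^3 := by
      have : bb/3 * (r * (3 * Real.sqrt 3 * S r^3)) = (bb * Real.sqrt 3) * (r * S r^3) := by ring
      rw [this, hbbt]; ring
    rw [e3] at e2
    have p1 : bb * r^3 ≤ r^3 := by nlinarith [pow_nonneg hr 3]
    have p2 : bb * r^2 ≤ r^2 := by nlinarith [pow_nonneg hr 2]
    have p3 : bb * r ≤ r := by nlinarith
    nlinarith [e2, p1, p2, p3, sq_nonneg (r-1), hb0.le]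
  · -- bbQ - r s³ ≤ 132 s³
    have e1 := mul_le_mul_of_nonneg_left (hstr3 r hr) hr
    -- bb*9r⁴ = 3√3 r⁴ ≤ r s³ : since 9bb = 3·(3bb) = 3√3
    have e4 : bb * (9 * r^4) = 3 * Real.sqrt 3 * r^4 := by
      have : bb * (9*r^4) = 3 * (3*bb) * r^4 := by ring
      rw [this, hb3]
    have p2 : 0 ≤ bb * r^2 := by positivity
    nlinarith [e1, e4, p2, hb0.le, hb1]


lemma hS31 (r : ℝ) : (1:ℝ) ≤ S r ^ 3 := by
  nlinarith [hS1 r, hSpos r, sq_nonneg (S r - 1), sq_nonneg (S r)]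

lemma lv1 (r : ℝ) (hr : 0 ≤ r) : |r - 3*r^3| ≤ S r ^ 3 := by
  have l3 := h5r3 r hr
  have hs3 := hS31 r
  rw [abs_le]
  constructor
  · nlinarith [pow_nonneg hr 3]
  · nlinarith [mul_nonneg hr (sq_nonneg (r-1)), sq_nonneg (3*r-1)]

lemma hsle2c (c : ℝ) (hc : 1 ≤ c) : S c ≤ 2*c := by
  have h1 : S c ^2 ≤ (2*c)^2 := by rw [hSsq]; nlinarith
  nlinarith [hSpos c]

lemma Abound (c : ℝ) (hc : 2 ≤ c) :
    |(c * S c ^ 3 - bb * (9*c^4 - 18*c^2 + 1)) / (c - 3*c^3)| ≤ 528 := by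
  have hc0 : (0:ℝ) < c := by linarith
  have hcc : c ≤ c^3 := by nlinarith [mul_nonneg (mul_nonneg hc0.le (by linarith : (0:ℝ) ≤ c-1)) (by linarith : (0:ℝ) ≤ c+1)]
  have hden : c - 3*c^3 < 0 := by nlinarith
  have hdabs : |c - 3*c^3| = 3*c^3 - c := by rw [abs_of_neg hden]; ring
  have hnum : |c * S c ^ 3 - bb * (9*c^4 - 18*c^2 + 1)| ≤ 132 * S c ^ 3 := by
    rw [abs_sub_comm]; exact KI c hc0.le
  have hs3 : S c ^ 3 ≤ 8 * c^3 := by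
    have := pow_le_pow_left₀ (hSpos c).le (hsle2c c (by linarith)) 3
    calc S c ^3 ≤ (2*c)^3 := this
      _ = 8*c^3 := by ring
  rw [abs_div, hdabs, div_le_iff₀ (by nlinarith)]
  nlinarith

lemma hnear (A r : ℝ) (hA : |A| ≤ 528) (h0 : 0 < r) (h4 : r < 1/4000) :
    |ww A r - bb| ≤ 1/4 := by
  have hs1 := hS1 r
  have hs3 : (1:ℝ) ≤ S r ^ 3 := hS31 r
  have hsq := hSsq r
  have key : ww A r - bb = (A*(r-3*r^3))/S r^3
      + (bb*((9*r^4-18*r^2+1) - S r^3))/S r^3 - r := by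
    rw [ww]; field_simp; ring
  have hr1 : r < 1 := by linarith
  have b1 : |(A*(r-3*r^3))/S r^3| ≤ 528 * r := by
    rw [abs_div, abs_of_pos (by positivity : (0:ℝ) < S r ^3), abs_mul]
    have h13 : |r - 3*r^3| ≤ r := by
      rw [abs_le]; constructor <;> nlinarith [pow_nonneg h0.le 3]
    calc |A| * |r-3*r^3| / S r^3 ≤ |A| * |r-3*r^3| := by
          apply div_le_self (by positivity) hs3
      _ ≤ 528 * r := by
          apply mul_le_mul hA h13 (abs_nonneg _) (by norm_num)
  have b2 : |(bb*((9*r^4-18*r^2+1) - S r^3))/S r^3| ≤ 29 * r^2 := by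
    rw [abs_div, abs_of_pos (by positivity : (0:ℝ) < S r ^3), abs_mul]
    have hQ : |(9*r^4-18*r^2+1) - S r^3| ≤ 29*r^2 := by
      have h6 : S r^6 = (1+3*r^2)^3 := by
        rw [show S r^6 = (S r^2)^3 by ring, hsq]
      have h63 : S r^3 ≤ S r^6 := pow_le_pow_right₀ hs1 (by norm_num)
      have hsm : r^2 ≤ (1:ℝ)/16000000 := by nlinarith
      have e1 : r^4 ≤ r^2/16000000 := by nlinarith [mul_le_mul_of_nonneg_left hsm (sq_nonneg r)]
      have e2 : r^6 ≤ r^4/16000000 := by nlinarith [mul_le_mul_of_nonneg_left hsm (pow_nonneg h0.le 4), sq_nonneg r, pow_nonneg h0.le 4]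
      rw [abs_le]; constructor
      · nlinarith [pow_pos (hSpos r) 3, sq_nonneg r]
      · nlinarith [sq_nonneg r]
    calc |bb| * |(9*r^4-18*r^2+1) - S r^3| / S r^3
        ≤ |bb| * |(9*r^4-18*r^2+1) - S r^3| := div_le_self (by positivity) hs3
      _ ≤ 1 * (29*r^2) := by
          apply mul_le_mul _ hQ (abs_nonneg _) (by norm_num)
          rw [abs_of_pos hbbpos]; exact hbble1
      _ = 29*r^2 := by ring
  rw [key]
  calc |A*(r-3*r^3)/S r^3 + bb*((9*r^4-18*r^2+1) - S r^3)/S r^3 - r|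
      ≤ |A*(r-3*r^3)/S r^3 + bb*((9*r^4-18*r^2+1) - S r^3)/S r^3| + |r| := by
        rw [sub_eq_add_neg]
        exact (abs_add_le _ _).trans (by rw [abs_neg])
    _ ≤ |A*(r-3*r^3)/S r^3| + |bb*((9*r^4-18*r^2+1) - S r^3)/S r^3| + |r| := by
        linarith [abs_add_le (A*(r-3*r^3)/S r^3) (bb*((9*r^4-18*r^2+1) - S r^3)/S r^3)]
    _ ≤ 528*r + 29*r^2 + r := by
        rw [abs_of_pos h0]; linarith
    _ ≤ 1/4 := by nlinarith

lemma N2key (A r : ℝ) : ww1 A r * r - ww A r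
    = (A*(1 - 15*r^2)*r + bb*(27*r^5 + 90*r^3 - 45*r)*r
       - (A*(r - 3*r^3) + bb*(9*r^4 - 18*r^2 + 1)) * S r^2) / S r^5 := by
  rw [ww, ww1]
  have hne := hSne r
  field_simp
  ring

lemma N2key' (A r : ℝ) : ww1 A r * r - ww A r
    = (A*(9*r^5 - 15*r^3) + bb*(135*r^4 - 30*r^2 - 1)) / S r^5 := by
  rw [N2key]
  congr 1
  rw [hSsq]
  ring

lemma N2bound (A r : ℝ) (hA : |A| ≤ 528) (hr : 0 ≤ r) :
    |ww1 A r * r - ww A r| ≤ 13000 := by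
  have hs1 := hS1 r
  have hs0 := hSpos r
  have hrs : r ≤ S r := by nlinarith [hSsq r]
  have h9 : 9 * r^5 ≤ S r ^ 5 := by
    have h := pow_le_pow_left₀ (mul_nonneg (Real.sqrt_nonneg 3) hr) (hstr r hr) 5
    have e : (Real.sqrt 3 * r)^5 = ((Real.sqrt 3)^2)^2 * Real.sqrt 3 * r^5 := by ring
    rw [e, ht2] at h
    nlinarith [ht1, pow_nonneg hr 5]
  have h4 : r^4 ≤ S r ^ 5 := by
    have := pow_le_pow_left₀ hr hrs 4
    nlinarith [pow_pos hs0 4]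
  have h35 : S r^3 ≤ S r^5 := pow_le_pow_right₀ hs1 (by norm_num)
  have h25 : S r^2 ≤ S r^5 := pow_le_pow_right₀ hs1 (by norm_num)
  have h3 : r^3 ≤ S r ^ 5 := le_trans (pow_le_pow_left₀ hr hrs 3) h35
  have h2 : r^2 ≤ S r ^ 5 := le_trans (pow_le_pow_left₀ hr hrs 2) h25
  have h1 : (1:ℝ) ≤ S r ^ 5 := le_trans (hS31 r) h35
  have hA' := abs_le.mp hA
  have p5u : A * r^5 ≤ 528 * r^5 := mul_le_mul_of_nonneg_right hA'.2 (pow_nonneg hr 5)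
  have p5l : -528 * r^5 ≤ A * r^5 := mul_le_mul_of_nonneg_right hA'.1 (pow_nonneg hr 5)
  have p3u : A * r^3 ≤ 528 * r^3 := mul_le_mul_of_nonneg_right hA'.2 (pow_nonneg hr 3)
  have p3l : -528 * r^3 ≤ A * r^3 := mul_le_mul_of_nonneg_right hA'.1 (pow_nonneg hr 3)
  have q4 : bb * r^4 ≤ r^4 := mul_le_of_le_one_left (pow_nonneg hr 4) hbble1
  have q4' : 0 ≤ bb * r^4 := mul_nonneg hbbpos.le (pow_nonneg hr 4)
  have q2 : bb * r^2 ≤ r^2 := mul_le_of_le_one_left (pow_nonneg hr 2) hbble1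
  have q2' : 0 ≤ bb * r^2 := mul_nonneg hbbpos.le (pow_nonneg hr 2)
  have qb := hbble1
  have qb' := hbbpos.le
  rw [N2key', abs_div, abs_of_pos (pow_pos hs0 5), div_le_iff₀ (pow_pos hs0 5)]
  rw [abs_le]
  constructor
  · nlinarith [h9, h4, h3, h2, h1, p5l, p3u, q4', q2, qb]
  · nlinarith [h9, h4, h3, h2, h1, p5u, p3l, q4, q2', qb']

lemma heq (A r : ℝ) : ww2 A r = -(5 * (1/3 + r^2) ^ (-(2:ℝ)) * (ww A r + r)) := by
  have hp : (0:ℝ) < 1/3 + r^2 := by positivity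
  have h1 : (1/3 + r^2 : ℝ) ^ (-(2:ℝ)) = ((1/3 + r^2)^(2:ℕ))⁻¹ := by
    rw [← Real.rpow_natCast (1/3+r^2) 2, ← Real.rpow_neg hp.le]; norm_num
  rw [h1, ww2, ww]
  have hsq := hSsq r
  have hne := hSne r
  have h13 : (1/3 + r^2 : ℝ) = S r^2/3 := by rw [hsq]; ring
  rw [h13]
  field_simp
  ring

lemma hwsmooth (A : ℝ) : ContDiff ℝ 2 (ww A) := by
  have hpoly : ContDiff ℝ 2 (fun r:ℝ => 1 + 3*r^2) := by
    apply contDiff_const.add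
    exact contDiff_const.mul (contDiff_id.pow 2)
  have hS : ContDiff ℝ 2 S := by
    rw [contDiff_iff_contDiffAt]
    intro x
    exact (hpoly.contDiffAt).sqrt (by positivity)
  have hnum : ContDiff ℝ 2 (fun r:ℝ => A*(r - 3*r^3) + bb*(9*r^4-18*r^2+1)) := by
    apply ContDiff.add
    · exact contDiff_const.mul (contDiff_id.sub (contDiff_const.mul (contDiff_id.pow 3)))
    · apply contDiff_const.mul
      exact ((contDiff_const.mul (contDiff_id.pow 4)).sub
        (contDiff_const.mul (contDiff_id.pow 2))).add contDiff_const
  exact (hnum.div (hS.pow 3) fun x => pow_ne_zero 3 (hSne x)).sub contDiff_id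

lemma wbound (A r : ℝ) (hA : |A| ≤ 528) (hr : 0 ≤ r) : |ww A r| ≤ 1000 := by
  have hs3 : (0:ℝ) < S r ^ 3 := pow_pos (hSpos r) 3
  have key : ww A r = (A*(r-3*r^3))/S r^3
      + (bb*(9*r^4-18*r^2+1) - r * S r^3)/S r^3 := by
    have := hSne r
    rw [ww]; field_simp; ring
  have b1 : |(A*(r-3*r^3))/S r^3| ≤ 528 := by
    rw [abs_div, abs_of_pos hs3, div_le_iff₀ hs3, abs_mul]
    exact mul_le_mul hA (lv1 r hr) (abs_nonneg _) (by norm_num)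
  have b2 : |(bb*(9*r^4-18*r^2+1) - r * S r^3)/S r^3| ≤ 132 := by
    rw [abs_div, abs_of_pos hs3, div_le_iff₀ hs3]
    exact KI r hr
  rw [key]
  calc |A*(r-3*r^3)/S r^3 + (bb*(9*r^4-18*r^2+1) - r * S r^3)/S r^3|
      ≤ |A*(r-3*r^3)/S r^3| + |(bb*(9*r^4-18*r^2+1) - r * S r^3)/S r^3| := abs_add_le _ _
    _ ≤ 1000 := by linarith

lemma hderiv_quot (A ρ : ℝ) (hρ : ρ ≠ 0) :
    deriv (fun σ => ww A σ / σ) ρ = (ww1 A ρ * ρ - ww A ρ * 1) / ρ^2 :=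
  ((hww A ρ).div (hasDerivAt_id' (x := ρ)) hρ).deriv

lemma hinteg (A r : ℝ) (hr : 0 < r) (hA : |A| ≤ 528) :
    MeasureTheory.IntegrableOn
      (fun ρ => (deriv (fun σ => ww A σ / σ) ρ)^2 * ρ^2) (Set.Ioi r) := by
  have hb : MeasureTheory.IntegrableOn (fun ρ:ℝ => 13000^2 * ρ ^ (-2:ℝ)) (Set.Ioi r) :=
    (integrableOn_Ioi_rpow_of_lt (by norm_num) hr).const_mul _
  refine MeasureTheory.Integrable.mono' hb ?_ ?_
  · exact (((measurable_deriv _).pow_const 2).mul (measurable_id.pow_const 2)).aestronglyMeasurable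
  · rw [MeasureTheory.ae_restrict_iff' measurableSet_Ioi]
    refine MeasureTheory.ae_of_all _ (fun ρ hρ => ?_)
    have hρ0 : 0 < ρ := lt_trans hr hρ
    rw [Real.norm_eq_abs, abs_of_nonneg (by positivity), hderiv_quot A ρ hρ0.ne']
    have hrpow : ρ ^ (-2:ℝ) = (ρ^(2:ℕ))⁻¹ := by
      rw [← Real.rpow_natCast ρ 2, ← Real.rpow_neg hρ0.le]; norm_num
    rw [hrpow]
    have hN := N2bound A ρ hA hρ0.le
    have hsq : (ww1 A ρ * ρ - ww A ρ)^2 ≤ 13000^2 := by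
      nlinarith [le_abs_self (ww1 A ρ * ρ - ww A ρ), neg_abs_le (ww1 A ρ * ρ - ww A ρ)]
    have e : ((ww1 A ρ * ρ - ww A ρ * 1)/ρ^2)^2 * ρ^2
        = (ww1 A ρ * ρ - ww A ρ)^2 / ρ^2 := by
      field_simp
    rw [e]
    rw [div_le_iff₀ (by positivity)]
    push_cast
    calc (ww1 A ρ * ρ - ww A ρ)^2 ≤ 13000^2 := hsq
      _ = 13000 ^ 2 * (ρ ^ 2)⁻¹ * ρ^2 := by field_simp

theorem stmt16 :
    ∃ c₅ r₄ C μ₀ : ℝ, 1 < c₅ ∧ r₄ ∈ Set.Ioo (0:ℝ) 1 ∧ 0 < C ∧ μ₀ ≠ 0 ∧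
      ∀ c : ℝ, c₅ < c → ∃ w : ℝ → ℝ,
        ContDiffOn ℝ 2 w (Set.Ioi 0) ∧
        (∀ r : ℝ, 0 < r →
          deriv (deriv w) r = -(5 * (1/3 + r^2) ^ (-(2:ℝ)) * (w r + r))) ∧
        w c = 0 ∧
        (∀ r : ℝ, 0 < r → r < r₄ → 1/2 ≤ w r / μ₀ ∧ w r / μ₀ ≤ 3/2) ∧
        (∀ r : ℝ, 0 < r → |w r| ≤ C) ∧
        (∀ r : ℝ, 0 < r →
          IntegrableOn (fun ρ => (deriv (fun σ => w σ / σ) ρ)^2 * ρ^2) (Set.Ioi r)) := by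

  refine ⟨2, 1/4000, 1000, bb, by norm_num, by norm_num [Set.mem_Ioo], by norm_num,
    hbbpos.ne', ?_⟩
  intro c hc
  set A := (c * S c ^ 3 - bb * (9*c^4 - 18*c^2 + 1)) / (c - 3*c^3) with hAdef
  have hA : |A| ≤ 528 := Abound c (by linarith)
  have hc0 : (0:ℝ) < c := by linarith
  refine ⟨ww A, (hwsmooth A).contDiffOn, ?_, ?_, ?_, ?_, ?_⟩
  · intro r hr
    have hd1 : deriv (ww A) = ww1 A := funext fun x => (hww A x).deriv
    rw [hd1, (hww1 A r).deriv]
    exact heq A r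
  · have hcc : c ≤ c^3 := by nlinarith
    have hden : c - 3*c^3 ≠ 0 := by nlinarith
    rw [ww, sub_eq_zero, div_eq_iff (pow_ne_zero 3 (hSne c))]
    rw [hAdef]
    have : 1 - c^2*3 ≠ 0 := by nlinarith
    field_simp
    ring
  · intro r hr0 hr4
    have h := abs_le.mp (hnear A r hA hr0 hr4)
    have hb2 := hbbhalf
    constructor
    · rw [le_div_iff₀ hbbpos]; linarith [h.1]
    · rw [div_le_iff₀ hbbpos]; linarith [h.2]
  · intro r hr; exact wbound A r hA hr.le
  · intro r hr; exact hinteg A r hr hA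
end
end

section
/- There is an absolute constant C > 0 such that for every measurable function φ : ℝ³ → ℝ with |φ(x)| ≤ |x|^(−1) for all x ≠ 0, every λ > 0 and all real numbers 0 ≤ r₁ < r₂ ≤ λ, one has ‖χ_{Ω_{r₁,r₂}} W_λ⁴·φ‖_{L¹L²} ≤ C · λ^(−1) · (r₂ − r₁)^(1/2). -/
open MeasureTheory Real Set

noncomputable section

open Metric
local notation "E3" => EuclideanSpace ℝ (Fin 3)

lemma my_vol_pos : 0 < (volume (ball (0:E3) 1)).toReal :=
  ENNReal.toReal_pos (measure_ball_pos volume 0 one_pos).ne' measure_ball_lt_top.ne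

lemma my_annulus_meas (a b : ℝ) : MeasurableSet {x : E3 | a < ‖x‖ ∧ ‖x‖ < b} :=
  (measurableSet_lt measurable_const measurable_norm).inter
    (measurableSet_lt measurable_norm measurable_const)

lemma my_annulus_integrable {a b : ℝ} (ha : 0 < a) :
    IntegrableOn (fun x : E3 => (‖x‖^2)⁻¹) {x : E3 | a < ‖x‖ ∧ ‖x‖ < b} := by
  have hS : MeasurableSet {x : E3 | a < ‖x‖ ∧ ‖x‖ < b} := my_annulus_meas a b
  have hsub : {x : E3 | a < ‖x‖ ∧ ‖x‖ < b} ⊆ ball (0:E3) b := by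
    intro x hx; simpa [mem_ball, dist_eq_norm] using hx.2
  refine Integrable.mono' (g := fun _ => (a^2)⁻¹) ?_ ?_ ?_
  · exact integrableOn_const ((measure_mono hsub).trans_lt measure_ball_lt_top).ne
  · exact ((measurable_norm.pow_const 2).inv).aestronglyMeasurable
  · filter_upwards [ae_restrict_mem hS] with x hx
    rw [Real.norm_eq_abs, abs_of_nonneg (by positivity)]
    exact inv_anti₀ (by positivity) (by nlinarith [hx.1])

lemma my_annulus_integral {a b : ℝ} (ha : 0 < a) (hab : a ≤ b) :
    ∫ x in {x : E3 | a < ‖x‖ ∧ ‖x‖ < b}, (‖x‖^2)⁻¹ =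
      3 * (volume (ball (0:E3) 1)).toReal * (b - a) := by
  have hS : MeasurableSet {x : E3 | a < ‖x‖ ∧ ‖x‖ < b} := my_annulus_meas a b
  have h1 : ∫ x in {x : E3 | a < ‖x‖ ∧ ‖x‖ < b}, (‖x‖^2)⁻¹
      = ∫ x : E3, (fun y : ℝ => (Ioo a b).indicator (fun y => (y^2)⁻¹) y) ‖x‖ := by
    rw [← integral_indicator hS]
    refine integral_congr_ae (Filter.Eventually.of_forall fun x => ?_)
    by_cases hx : a < ‖x‖ ∧ ‖x‖ < b <;>
      simp [Set.indicator_apply, hx, Set.mem_Ioo]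
  rw [h1, integral_fun_norm_addHaar volume
    (fun y : ℝ => (Ioo a b).indicator (fun y => (y^2)⁻¹) y)]
  have hdim : Module.finrank ℝ E3 = 3 := finrank_euclideanSpace_fin
  rw [hdim]
  have h2 : ∫ y in Ioi (0:ℝ), y ^ (3-1) • (Ioo a b).indicator (fun y => (y^2)⁻¹) y
      = b - a := by
    have : ∀ y ∈ Ioi (0:ℝ), y ^ (3-1) • (Ioo a b).indicator (fun y => (y^2)⁻¹) y
        = (Ioo a b).indicator (fun _ => (1:ℝ)) y := by
      intro y hy
      by_cases hyy : y ∈ Ioo a b <;>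
        simp [Set.indicator_apply, hyy, smul_eq_mul, mul_inv_cancel₀ (pow_ne_zero 2 (ne_of_gt (mem_Ioi.mp hy)))]
    rw [setIntegral_congr_fun measurableSet_Ioi this, setIntegral_indicator measurableSet_Ioo]
    have : Ioi (0:ℝ) ∩ Ioo a b = Ioo a b := inter_eq_self_of_subset_right (fun y hy => lt_trans ha hy.1)
    rw [this]
    simp [Real.volume_Ioo, ENNReal.toReal_ofReal (by linarith : (0:ℝ) ≤ b - a), hab]
  rw [h2]
  simp [smul_eq_mul, Measure.real]; ring

lemma my_rpow_half_pow4 {y : ℝ} (hy : 0 < y) : (y ^ (-(1:ℝ)/2))^(4:ℕ) = (y^2)⁻¹ := by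
  rw [← Real.rpow_natCast (y ^ (-(1:ℝ)/2)) 4, ← Real.rpow_mul hy.le]
  rw [show (-(1:ℝ)/2 * ((4:ℕ):ℝ)) = -2 by norm_num, Real.rpow_neg hy.le]
  norm_num [Real.rpow_two]

lemma my_W4 {lam : ℝ} (hlam : 0 < lam) (x : E3) :
    (Wlam lam x)^4 = (lam^2)⁻¹ * ((1/3 + ‖x‖^2/lam^2)^2)⁻¹ := by
  have hq : (0:ℝ) < 1/3 + ‖x‖^2/lam^2 := by positivity
  have hn : ‖lam⁻¹ • x‖^2 = ‖x‖^2/lam^2 := by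
    rw [norm_smul, mul_pow, Real.norm_eq_abs, abs_inv, abs_of_pos hlam]
    ring
  rw [Wlam, W3, hn, mul_pow, my_rpow_half_pow4 hlam, my_rpow_half_pow4 hq]

lemma my_ptwise {lam a : ℝ} (hlam : 0 < lam) (ha : 0 ≤ a) {φ : E3 → ℝ}
    (hφ : ∀ x : E3, x ≠ 0 → |φ x| ≤ ‖x‖⁻¹) {x : E3} (hx : a < ‖x‖) :
    ((Wlam lam x)^4 * φ x)^2
      ≤ ((lam^2)⁻¹ * ((1/3 + a^2/lam^2)^2)⁻¹)^2 * (‖x‖^2)⁻¹ := by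
  have hxn : (0:ℝ) < ‖x‖ := lt_of_le_of_lt ha hx
  have hx0 : x ≠ 0 := fun h => by simp [h] at hxn
  have hqa : (0:ℝ) < 1/3 + a^2/lam^2 := by positivity
  have hq : (0:ℝ) < 1/3 + ‖x‖^2/lam^2 := by positivity
  have hφ2 : (φ x)^2 ≤ (‖x‖^2)⁻¹ := by
    have := hφ x hx0
    calc (φ x)^2 = |φ x|^2 := (sq_abs _).symm
    _ ≤ (‖x‖⁻¹)^2 := by gcongr
    _ = (‖x‖^2)⁻¹ := by rw [inv_pow]
  have hmono : ((1/3 + ‖x‖^2/lam^2)^2)⁻¹ ≤ ((1/3 + a^2/lam^2)^2)⁻¹ := by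
    gcongr
  calc ((Wlam lam x)^4 * φ x)^2 = ((lam^2)⁻¹ * ((1/3 + ‖x‖^2/lam^2)^2)⁻¹)^2 * (φ x)^2 := by
        rw [mul_pow, my_W4 hlam]
    _ ≤ ((lam^2)⁻¹ * ((1/3 + a^2/lam^2)^2)⁻¹)^2 * (‖x‖^2)⁻¹ := by
        gcongr

lemma my_inner {lam r₁ r₂ : ℝ} (hlam : 0 < lam) (hr₁ : 0 ≤ r₁) (hr : r₁ < r₂)
    {φ : E3 → ℝ} (hφ : ∀ x : E3, x ≠ 0 → |φ x| ≤ ‖x‖⁻¹) {t : ℝ} (ht : 0 < |t| + r₁) :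
    (∫ x in {x : E3 | (x, t) ∈ channel r₁ r₂}, ((Wlam lam x)^4 * φ x)^2) ^ ((1:ℝ)/2)
      ≤ (lam^2)⁻¹ * ((1/3 + (|t|+r₁)^2/lam^2)^2)⁻¹
          * (Real.sqrt (3 * (volume (ball (0:E3) 1)).toReal) * Real.sqrt (r₂ - r₁)) := by
  set a := |t| + r₁ with ha_def
  set b := |t| + r₂ with hb_def
  set c := (lam^2)⁻¹ * ((1/3 + a^2/lam^2)^2)⁻¹ with hc_def
  have hc : 0 ≤ c := by positivity
  have hab : a ≤ b := by simp only [ha_def, hb_def]; linarith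
  have hSeq : {x : E3 | (x, t) ∈ channel r₁ r₂} = {x : E3 | a < ‖x‖ ∧ ‖x‖ < b} := rfl
  have hI : (∫ x in {x : E3 | a < ‖x‖ ∧ ‖x‖ < b}, ((Wlam lam x)^4 * φ x)^2)
      ≤ c^2 * (3 * (volume (ball (0:E3) 1)).toReal * (b - a)) := by
    calc (∫ x in {x : E3 | a < ‖x‖ ∧ ‖x‖ < b}, ((Wlam lam x)^4 * φ x)^2)
        ≤ ∫ x in {x : E3 | a < ‖x‖ ∧ ‖x‖ < b}, c^2 * (‖x‖^2)⁻¹ := by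
          refine integral_mono_of_nonneg (Filter.Eventually.of_forall fun x => sq_nonneg _)
            ((my_annulus_integrable ht).const_mul _) ?_
          refine (ae_restrict_iff' (my_annulus_meas a b)).2
            (Filter.Eventually.of_forall fun x hx => ?_)
          exact my_ptwise hlam ht.le hφ hx.1
      _ = c^2 * ∫ x in {x : E3 | a < ‖x‖ ∧ ‖x‖ < b}, (‖x‖^2)⁻¹ := MeasureTheory.integral_const_mul _ _
      _ = c^2 * (3 * (volume (ball (0:E3) 1)).toReal * (b - a)) := by
          rw [my_annulus_integral ht hab]
  have hnn : 0 ≤ ∫ x in {x : E3 | a < ‖x‖ ∧ ‖x‖ < b}, ((Wlam lam x)^4 * φ x)^2 :=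
    integral_nonneg fun x => sq_nonneg _
  rw [hSeq]
  calc (∫ x in {x : E3 | a < ‖x‖ ∧ ‖x‖ < b}, ((Wlam lam x)^4 * φ x)^2) ^ ((1:ℝ)/2)
      ≤ (c^2 * (3 * (volume (ball (0:E3) 1)).toReal * (b - a))) ^ ((1:ℝ)/2) :=
        Real.rpow_le_rpow hnn hI (by norm_num)
    _ = c * (Real.sqrt (3 * (volume (ball (0:E3) 1)).toReal) * Real.sqrt (r₂ - r₁)) := by
        rw [← Real.sqrt_eq_rpow, Real.sqrt_mul (sq_nonneg c), Real.sqrt_sq hc,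
          Real.sqrt_mul (by positivity), show b - a = r₂ - r₁ by simp [ha_def, hb_def]]

lemma my_key {s u : ℝ} (hsu : s^2 ≤ u) : ((1/3 + u)^2)⁻¹ ≤ 9 * (1 + s^2)⁻¹ := by
  have h1 : (0:ℝ) < 1 + s^2 := by positivity
  have h2 : (0:ℝ) < (1/3 + u)^2 := by nlinarith [sq_nonneg s]
  rw [show (9:ℝ) * (1 + s^2)⁻¹ = 9 / (1 + s^2) by ring, inv_eq_one_div,
    div_le_div_iff₀ h2 h1]
  nlinarith [sq_nonneg s, sq_nonneg u]


theorem stmt17 :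
    ∃ C : ℝ, 0 < C ∧ ∀ (φ : EuclideanSpace ℝ (Fin 3) → ℝ) (lam r₁ r₂ : ℝ),
      Measurable φ → (∀ x : EuclideanSpace ℝ (Fin 3), x ≠ 0 → |φ x| ≤ ‖x‖⁻¹) →
      0 < lam → 0 ≤ r₁ → r₁ < r₂ → r₂ ≤ lam →
      L1L2 (channel r₁ r₂) (fun x _ => (Wlam lam x)^4 * φ x)
        ≤ C * lam⁻¹ * (r₂ - r₁) ^ ((1:ℝ)/2) := by
  set V := (volume (ball (0:E3) 1)).toReal with hV_def
  have hV : 0 < V := my_vol_pos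
  refine ⟨9 * π * Real.sqrt (3 * V), by positivity, ?_⟩
  intro φ lam r₁ r₂ hφm hφ hlam hr₁ hr hr₂
  have hΔ : (0:ℝ) ≤ r₂ - r₁ := by linarith
  set K := 9 * Real.sqrt (3 * V) * Real.sqrt (r₂ - r₁) * (lam^2)⁻¹ with hK_def
  have hK : 0 ≤ K := by positivity
  have hMint : Integrable (fun t : ℝ => K * (1 + (t/lam)^2)⁻¹) :=
    (integrable_inv_one_add_sq.comp_div hlam.ne').const_mul K
  have hmain : L1L2 (channel r₁ r₂) (fun x _ => (Wlam lam x)^4 * φ x)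
      ≤ ∫ t : ℝ, K * (1 + (t/lam)^2)⁻¹ := by
    rw [L1L2]
    refine integral_mono_of_nonneg ?_ hMint ?_
    · exact Filter.Eventually.of_forall fun t =>
        Real.rpow_nonneg (integral_nonneg fun x => sq_nonneg _) _
    · have h0 : ∀ᵐ t : ℝ, t ≠ 0 := by
        refine ae_iff.mpr ?_
        simp
      filter_upwards [h0] with t ht
      have hat : 0 < |t| + r₁ := by
        have := abs_pos.mpr ht; linarith
      refine (my_inner hlam hr₁ hr hφ hat).trans ?_
      have hs : (t/lam)^2 ≤ (|t|+r₁)^2/lam^2 := by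
        rw [div_pow, div_le_div_iff₀ (by positivity) (by positivity)]
        nlinarith [abs_nonneg t, sq_abs t, sq_nonneg lam,
          mul_nonneg (by nlinarith [abs_nonneg t, sq_abs t] : (0:ℝ) ≤ (|t|+r₁)^2 - t^2) (sq_nonneg lam)]
      have hkey := my_key hs
      calc (lam^2)⁻¹ * ((1/3 + (|t|+r₁)^2/lam^2)^2)⁻¹
            * (Real.sqrt (3 * V) * Real.sqrt (r₂ - r₁))
          ≤ (lam^2)⁻¹ * (9 * (1 + (t/lam)^2)⁻¹)
            * (Real.sqrt (3 * V) * Real.sqrt (r₂ - r₁)) := by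
            gcongr
        _ = K * (1 + (t/lam)^2)⁻¹ := by rw [hK_def]; ring
  refine hmain.trans ?_
  have hint : ∫ t : ℝ, K * (1 + (t/lam)^2)⁻¹ = K * (lam * π) := by
    rw [MeasureTheory.integral_const_mul,
      MeasureTheory.Measure.integral_comp_div (fun y : ℝ => (1 + y^2)⁻¹) lam,
      integral_univ_inv_one_add_sq, smul_eq_mul, abs_of_pos hlam]
  rw [hint]
  rw [show (r₂ - r₁) ^ ((1:ℝ)/2) = Real.sqrt (r₂ - r₁) from (Real.sqrt_eq_rpow _).symm]
  rw [hK_def]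
  apply le_of_eq
  have hll : (lam^2)⁻¹ * lam = lam⁻¹ := by
    field_simp
  linear_combination (9 * π * Real.sqrt (3*V) * Real.sqrt (r₂ - r₁)) * hll
end
end

section
/- For every measurable G : ℝ → ℝ with ∫_ℝ G(s)² ds < ∞, one has lim_{t→+∞} sup_{r>0} r^(−1/2) · ∫_{−t}^{−t+r} |G(s)| ds = 0. -/
open MeasureTheory Real Set

noncomputable section

private lemma cs_aux (G : ℝ → ℝ) (hmeas : Measurable G)
    (hG2 : Integrable (fun s => (G s)^2)) {E : Set ℝ} (hE : MeasurableSet E)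
    (hfin : volume E ≠ ⊤) :
    ∫ s in E, |G s| ≤ Real.sqrt (volume E).toReal * Real.sqrt (∫ s in E, (G s)^2) := by
  have hfm : IsFiniteMeasure (volume.restrict E) :=
    ⟨by rwa [Measure.restrict_apply_univ, lt_top_iff_ne_top]⟩
  have hL2 : MemLp G 2 (volume : Measure ℝ) :=
    (memLp_two_iff_integrable_sq hmeas.aestronglyMeasurable).2 hG2
  have hL2E : MemLp (fun s => |G s|) (ENNReal.ofReal 2) (volume.restrict E) := by
    have := (hL2.restrict E).norm
    simpa [Real.norm_eq_abs, ENNReal.ofReal_ofNat] using this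
  have hconst : MemLp (fun _ : ℝ => (1:ℝ)) (ENNReal.ofReal 2) (volume.restrict E) := by
    simpa [ENNReal.ofReal_ofNat] using (memLp_const (μ := volume.restrict E) (p := 2) (1:ℝ))
  have hpq : (2:ℝ).HolderConjugate 2 := Real.HolderConjugate.two_two
  have h := integral_mul_le_Lp_mul_Lq_of_nonneg (μ := volume.restrict E) hpq
      (Filter.Eventually.of_forall fun s => abs_nonneg _)
      (Filter.Eventually.of_forall fun s => zero_le_one) hL2E hconst
  have e1 : ∀ s : ℝ, |G s| ^ (2:ℝ) = (G s)^2 := fun s => by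
    rw [show (2:ℝ) = ((2:ℕ):ℝ) by norm_num, Real.rpow_natCast, sq_abs]
  have e2 : (∫ s in E, (1:ℝ) ^ (2:ℝ)) = (volume E).toReal := by
    simp [Real.one_rpow, Measure.restrict_apply_univ, measureReal_def]
  simp only [mul_one, e1, e2] at h
  calc ∫ s in E, |G s| ≤ (∫ s in E, (G s)^2) ^ ((1:ℝ)/2) * (volume E).toReal ^ ((1:ℝ)/2) := h
    _ = Real.sqrt (volume E).toReal * Real.sqrt (∫ s in E, (G s)^2) := by
        rw [← Real.sqrt_eq_rpow, ← Real.sqrt_eq_rpow, mul_comm]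

set_option maxHeartbeats 1000000 in
theorem stmt19 (G : ℝ → ℝ) (hmeas : Measurable G)
    (hG2 : Integrable (fun s => (G s)^2)) :
    Filter.Tendsto
      (fun t : ℝ =>
        sSup {A : ℝ | ∃ r : ℝ, 0 < r ∧ A = (∫ s in (-t)..(-t + r), |G s|) / Real.sqrt r})
      Filter.atTop (nhds 0) := by
  have hL2 : MemLp G 2 (volume : Measure ℝ) :=
    (memLp_two_iff_integrable_sq hmeas.aestronglyMeasurable).2 hG2
  have habs : ∀ {E : Set ℝ}, MeasurableSet E → volume E ≠ ⊤ →
      IntegrableOn (fun s => |G s|) E := by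
    intro E hE hfin
    have hfm : IsFiniteMeasure (volume.restrict E) :=
      ⟨by rwa [Measure.restrict_apply_univ, lt_top_iff_ne_top]⟩
    have := ((hL2.restrict E).norm).integrable (by norm_num)
    simpa [Real.norm_eq_abs, IntegrableOn] using this
  have tendA : Filter.Tendsto (fun n : ℝ => ∫ s in Iic (-n), (G s)^2)
      Filter.atTop (nhds 0) := by
    have hInt : (⋂ n : ℝ, Iic (-n)) = (∅ : Set ℝ) := by
      ext x
      simp only [mem_iInter, mem_Iic, mem_empty_iff_false, iff_false, not_forall, not_le]
      exact ⟨-x + 1, by linarith⟩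
    have := tendsto_setIntegral_of_antitone (μ := volume) (f := fun s => (G s)^2)
      (s := fun n : ℝ => Iic (-n)) (fun n => measurableSet_Iic)
      (fun i j hij => Iic_subset_Iic.2 (neg_le_neg hij)) ⟨0, hG2.integrableOn⟩
    rwa [hInt, Measure.restrict_empty, integral_zero_measure] at this
  have tendB : Filter.Tendsto (fun n : ℝ => ∫ s in Ici n, (G s)^2)
      Filter.atTop (nhds 0) := by
    have hInt : (⋂ n : ℝ, Ici n) = (∅ : Set ℝ) := by
      ext x
      simp only [mem_iInter, mem_Ici, mem_empty_iff_false, iff_false, not_forall, not_le]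
      exact ⟨x + 1, by linarith⟩
    have := tendsto_setIntegral_of_antitone (μ := volume) (f := fun s => (G s)^2)
      (s := fun n : ℝ => Ici n) (fun n => measurableSet_Ici)
      (fun i j hij => Ici_subset_Ici.2 hij) ⟨0, hG2.integrableOn⟩
    rwa [hInt, Measure.restrict_empty, integral_zero_measure] at this
  rw [Metric.tendsto_atTop]
  intro ε hε
  have hδ : (0:ℝ) < (ε/4)^2/2 := by positivity
  obtain ⟨N₁, hN₁⟩ := (Metric.tendsto_atTop.1 tendA) _ hδ
  obtain ⟨N₂, hN₂⟩ := (Metric.tendsto_atTop.1 tendB) _ hδ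
  set a : ℝ := -N₁ with ha_def
  set b : ℝ := max N₂ (a + 1) with hb_def
  have hab : a < b := lt_of_lt_of_le (by linarith) (le_max_right _ _)
  have hIicA : ∫ s in Iic a, (G s)^2 < (ε/4)^2/2 := by
    have h := hN₁ N₁ le_rfl
    rw [Real.dist_eq, sub_zero] at h
    exact lt_of_le_of_lt (le_abs_self _) h
  have hIciB : ∫ s in Ici b, (G s)^2 < (ε/4)^2/2 := by
    have h := hN₂ b (le_max_left _ _)
    rw [Real.dist_eq, sub_zero] at h
    exact lt_of_le_of_lt (le_abs_self _) h
  set M : ℝ := ∫ s in Icc a b, |G s| with hM_def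
  have hM0 : 0 ≤ M := setIntegral_nonneg measurableSet_Icc fun s _ => abs_nonneg _
  refine ⟨max (1 - a) ((4*M/ε)^2 + 1 - a), fun t ht => ?_⟩
  have ht1 : 1 ≤ t + a := by
    have := le_trans (le_max_left _ _) ht; linarith
  have ht2 : (4*M/ε)^2 + 1 ≤ t + a := by
    have := le_trans (le_max_right _ _) ht; linarith
  rw [Real.dist_eq, sub_zero]
  have hnn : ∀ A ∈ {A : ℝ | ∃ r : ℝ, 0 < r ∧
      A = (∫ s in (-t)..(-t + r), |G s|) / Real.sqrt r}, 0 ≤ A := by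
    rintro A ⟨r, hr, rfl⟩
    exact div_nonneg
      (intervalIntegral.integral_nonneg (by linarith) fun s _ => abs_nonneg _)
      (Real.sqrt_nonneg _)
  have hS0 : 0 ≤ sSup {A : ℝ | ∃ r : ℝ, 0 < r ∧
      A = (∫ s in (-t)..(-t + r), |G s|) / Real.sqrt r} := Real.sSup_nonneg hnn
  rw [abs_of_nonneg hS0]
  have hbound : sSup {A : ℝ | ∃ r : ℝ, 0 < r ∧
      A = (∫ s in (-t)..(-t + r), |G s|) / Real.sqrt r} ≤ ε/2 := by
    apply Real.sSup_le _ (by linarith)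
    rintro A ⟨r, hr, rfl⟩
    have hrs : 0 < Real.sqrt r := Real.sqrt_pos.2 hr
    rw [div_le_iff₀ hrs]
    have hle : -t ≤ -t + r := by linarith
    rw [intervalIntegral.integral_of_le hle]
    set I : Set ℝ := Ioc (-t) (-t + r) with hI_def
    have hIvol : volume I ≠ ⊤ := by
      rw [hI_def, Real.volume_Ioc]; exact ENNReal.ofReal_ne_top
    have hIint : IntegrableOn (fun s => |G s|) I := habs measurableSet_Ioc hIvol
    have hsplit : (∫ s in I ∩ Icc a b, |G s|) + ∫ s in I \ Icc a b, |G s|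
        = ∫ s in I, |G s| := integral_inter_add_diff measurableSet_Icc hIint
    have hE1meas : MeasurableSet (I \ Icc a b) := measurableSet_Ioc.diff measurableSet_Icc
    have hE1vol : volume (I \ Icc a b) ≠ ⊤ :=
      ne_top_of_le_ne_top hIvol (measure_mono diff_subset)
    have hE1vol_le : (volume (I \ Icc a b)).toReal ≤ r := by
      have h1 : (volume (I \ Icc a b)).toReal ≤ (volume I).toReal :=
        ENNReal.toReal_mono hIvol (measure_mono diff_subset)
      refine h1.trans ?_
      rw [hI_def, Real.volume_Ioc, ENNReal.toReal_ofReal (by linarith)]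
      linarith
    have hE1sq : ∫ s in I \ Icc a b, (G s)^2 ≤ (ε/4)^2 := by
      have hsub : I \ Icc a b ⊆ Iic a ∪ Ici b := by
        rintro s ⟨hsI, hsn⟩
        rw [mem_Icc, not_and_or, not_le, not_le] at hsn
        rcases hsn with h | h
        · exact Or.inl (le_of_lt h)
        · exact Or.inr (le_of_lt h)
      have hdisj : Disjoint (Iic a) (Ici b) := Iic_disjoint_Ici.2 (not_le.2 hab)
      have hun : IntegrableOn (fun s => (G s)^2) (Iic a ∪ Ici b) volume := hG2.integrableOn
      have hmono := setIntegral_mono_set hun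
        (Filter.Eventually.of_forall fun s => sq_nonneg (G s))
        (HasSubset.Subset.eventuallyLE hsub)
      rw [setIntegral_union hdisj measurableSet_Ici hG2.integrableOn hG2.integrableOn] at hmono
      linarith
    have hE1sq0 : 0 ≤ ∫ s in I \ Icc a b, (G s)^2 :=
      setIntegral_nonneg hE1meas fun s _ => sq_nonneg _
    have hdiff : ∫ s in I \ Icc a b, |G s| ≤ ε/4 * Real.sqrt r := by
      have hcs := cs_aux G hmeas hG2 hE1meas hE1vol
      have h1 : Real.sqrt (volume (I \ Icc a b)).toReal ≤ Real.sqrt r :=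
        Real.sqrt_le_sqrt hE1vol_le
      have h2 : Real.sqrt (∫ s in I \ Icc a b, (G s)^2) ≤ ε/4 := by
        have := Real.sqrt_le_sqrt hE1sq
        rwa [Real.sqrt_sq (by positivity)] at this
      calc ∫ s in I \ Icc a b, |G s|
          ≤ Real.sqrt (volume (I \ Icc a b)).toReal
            * Real.sqrt (∫ s in I \ Icc a b, (G s)^2) := hcs
        _ ≤ Real.sqrt r * (ε/4) :=
            mul_le_mul h1 h2 (Real.sqrt_nonneg _) (Real.sqrt_nonneg _)
        _ = ε/4 * Real.sqrt r := mul_comm _ _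
    by_cases hcase : -t + r < a
    · have hempty : I ∩ Icc a b = (∅ : Set ℝ) := by
        ext s
        simp only [hI_def, mem_inter_iff, mem_Ioc, mem_Icc, mem_empty_iff_false, iff_false,
          not_and]
        rintro ⟨_, h1⟩ h2
        intro _
        linarith
      rw [← hsplit, hempty, setIntegral_empty, zero_add]
      nlinarith [Real.sqrt_nonneg r]
    · push_neg at hcase
      have hinter : ∫ s in I ∩ Icc a b, |G s| ≤ M := by
        refine setIntegral_mono_set
          (habs measurableSet_Icc (by rw [Real.volume_Icc]; exact ENNReal.ofReal_ne_top))
          (Filter.Eventually.of_forall fun s => abs_nonneg _)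
          (HasSubset.Subset.eventuallyLE inter_subset_right)
      have hMr : M ≤ ε/4 * Real.sqrt r := by
        have h1 : Real.sqrt ((4*M/ε)^2) ≤ Real.sqrt r :=
          Real.sqrt_le_sqrt (by linarith)
        rw [Real.sqrt_sq (by positivity)] at h1
        have h2 := (div_le_iff₀ hε).1 h1
        nlinarith [Real.sqrt_nonneg r]
      rw [← hsplit]
      linarith
  linarith
end
end
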